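/- If λ is a partition of n with s ≥ 3 even parts λ_1^e ≥ … ≥ λ_s^e, each greater than its unique odd part 1, then μ = (λ_1^e + 1, λ_2^e, …, λ_s^e) is a partition of n with exactly one odd part λ_1^e + 1 strictly greater than all even parts, and this correspondence is a bijection between such λ of size n and partitions of n counted by p_{eu}^{od} with exactly one odd part and at least two even parts, for n ≥ 7. -/

import Mathlib

def OddDistinctGtEven (M : Multiset ℕ) : Prop :=
  (M.filter (fun x => Odd x)).Nodup ∧
  ∀ o ∈ M, Odd o → ∀ e ∈ M, Even e → e < o

def EvenGtOddDistinct (M : Multiset ℕ) : Prop :=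
  (M.filter (fun x => Odd x)).Nodup ∧
  ∀ e ∈ M, Even e → ∀ o ∈ M, Odd o → o < e

/-- number of partitions of n with odd parts distinct and all greater than even parts -/
noncomputable def peuod (n : ℕ) : ℕ := Nat.card {p : n.Partition // OddDistinctGtEven p.parts}

/-- number of partitions of n with even parts all greater than the distinct odd parts -/
noncomputable def podeu (n : ℕ) : ℕ := Nat.card {p : n.Partition // EvenGtOddDistinct p.parts}

lemma sup_mem_of_ne_zero : ∀ (M : Multiset ℕ), M ≠ 0 → M.sup ∈ M := by
  intro M
  induction M using Multiset.induction with
  | empty => simp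
  | cons a s ih =>
    intro _
    rw [Multiset.sup_cons]
    rcases eq_or_ne s 0 with rfl | hs
    · simp
    · rcases le_total s.sup a with h | h
      · rw [sup_eq_left.2 h]; exact Multiset.mem_cons_self a s
      · rw [sup_eq_right.2 h]; exact Multiset.mem_cons_of_mem (ih hs)

lemma dom_facts (M : Multiset ℕ) (h1 : M.count 1 = 1)
    (h2 : ∀ x ∈ M, x ≠ 1 → Even x) (h3 : 3 ≤ (M.filter (fun x => Even x)).card) :
    1 ∈ M ∧ (∀ x ∈ M.erase 1, Even x) ∧ 3 ≤ (M.erase 1).card ∧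
      (M.erase 1).sup ∈ M.erase 1 := by
  have h1m : 1 ∈ M := by rw [← Multiset.count_pos, h1]; norm_num
  have hc0 : (M.erase 1).count 1 = 0 := by
    rw [Multiset.count_erase_self, h1]
  have hev : ∀ x ∈ M.erase 1, Even x := by
    intro x hx
    have hne : x ≠ 1 := by
      rintro rfl
      have hp := Multiset.count_pos.2 hx
      omega
    exact h2 x (Multiset.mem_of_mem_erase hx) hne
  have hfe : (M.erase 1).filter (fun x => Even x) = M.erase 1 :=
    Multiset.filter_eq_self.2 hev
  have hMf : M.filter (fun x => Even x) = (M.erase 1).filter (fun x => Even x) := by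
    conv_lhs => rw [← Multiset.cons_erase h1m]
    rw [Multiset.filter_cons]
    simp
  have hcard : 3 ≤ (M.erase 1).card := by
    rw [hMf, hfe] at h3; exact h3
  refine ⟨h1m, hev, hcard, sup_mem_of_ne_zero _ ?_⟩
  intro h0
  rw [h0] at hcard
  simp at hcard

lemma tgt_facts (μ : Multiset ℕ) (h2 : (μ.filter (fun x => Odd x)).card = 1)
    (h3 : 2 ≤ (μ.filter (fun x => Even x)).card) (h4 : OddDistinctGtEven μ)
    (h5 : ∀ x ∈ μ, 0 < x) :
    Odd μ.sup ∧ 3 ≤ μ.sup ∧ μ.sup ∈ μ ∧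
      (∀ b ∈ μ.erase μ.sup, Even b ∧ b + 1 ≤ μ.sup) := by
  obtain ⟨o, ho⟩ := Multiset.card_eq_one.mp h2
  have hoin : o ∈ μ ∧ Odd o := by
    have : o ∈ μ.filter (fun x => Odd x) := by rw [ho]; simp
    simpa using this
  have hodd_eq : ∀ b ∈ μ, Odd b → b = o := by
    intro b hb hbo
    have : b ∈ μ.filter (fun x => Odd x) := Multiset.mem_filter.2 ⟨hb, hbo⟩
    rw [ho] at this; simpa using this
  have hsup : μ.sup = o := by
    apply le_antisymm
    · apply Multiset.sup_le.2
      intro b hb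
      rcases Nat.even_or_odd b with hbe | hbo
      · exact le_of_lt (h4.2 o hoin.1 hoin.2 b hb hbe)
      · exact le_of_eq (hodd_eq b hb hbo)
    · exact Multiset.le_sup hoin.1
  have hcounto : μ.count o = 1 := by
    have := congrArg (Multiset.count o) ho
    rwa [Multiset.count_filter_of_pos hoin.2, Multiset.count_singleton_self] at this
  have he2 : ∃ e ∈ μ, Even e := by
    have : μ.filter (fun x => Even x) ≠ 0 := by
      intro h; rw [h] at h3; simp at h3
    obtain ⟨e, he⟩ := Multiset.exists_mem_of_ne_zero this
    exact ⟨e, (Multiset.mem_filter.1 he).1, (Multiset.mem_filter.1 he).2⟩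
  have ho3 : 3 ≤ o := by
    obtain ⟨e, hem, hee⟩ := he2
    have h1 := h4.2 o hoin.1 hoin.2 e hem hee
    have h2 := h5 e hem
    rcases hoin.2 with ⟨k, hk⟩
    rcases hee with ⟨j, hj⟩
    omega
  rw [hsup]
  refine ⟨hoin.2, ho3, hoin.1, ?_⟩
  intro b hb
  have hbm : b ∈ μ := Multiset.mem_of_mem_erase hb
  have hbne : b ≠ o := by
    rintro rfl
    have : (μ.erase b).count b = 0 := by rw [Multiset.count_erase_self, hcounto]
    have hp := Multiset.count_pos.2 hb
    omega
  have hbe : Even b := by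
    rcases Nat.even_or_odd b with h | h
    · exact h
    · exact absurd (hodd_eq b hbm h) hbne
  exact ⟨hbe, h4.2 o hoin.1 hoin.2 b hbm hbe⟩

theorem case_eleven_bijection (n : ℕ) (hn : 7 ≤ n) :
    Set.BijOn
      (fun M : Multiset ℕ =>
        ((M.erase 1).sup + 1) ::ₘ ((M.erase 1).erase ((M.erase 1).sup)))
      {M : Multiset ℕ | M.sum = n ∧ M.count 1 = 1 ∧
        (∀ x ∈ M, x ≠ 1 → Even x) ∧ 3 ≤ (M.filter (fun x => Even x)).card ∧
        (∀ x ∈ M, 1 < x ∨ x = 1)}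
      {M : Multiset ℕ | M.sum = n ∧ (M.filter (fun x => Odd x)).card = 1 ∧
        2 ≤ (M.filter (fun x => Even x)).card ∧ OddDistinctGtEven M ∧
        (∀ x ∈ M, 0 < x)} := by
  refine Set.InvOn.bijOn
    (f' := fun μ : Multiset ℕ => 1 ::ₘ (μ.sup - 1) ::ₘ (μ.erase μ.sup)) ⟨?_, ?_⟩ ?_ ?_
  · -- LeftInvOn
    rintro M ⟨hsum, hc1, hev, hcard, hpos⟩
    obtain ⟨h1m, hevN, hcN, hmN⟩ := dom_facts M hc1 hev hcard
    dsimp only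
    set N := M.erase 1 with hN
    set m := N.sup with hm
    have hsupX : (N.erase m).sup ≤ m :=
      Multiset.sup_le.2 fun b hb => Multiset.le_sup (Multiset.mem_of_mem_erase hb)
    have hsup : ((m + 1) ::ₘ N.erase m).sup = m + 1 := by
      rw [Multiset.sup_cons]
      exact sup_eq_left.2 (le_trans hsupX (Nat.le_succ m))
    simp only [hsup, Multiset.erase_cons_head, Nat.add_sub_cancel]
    rw [Multiset.cons_erase hmN, Multiset.cons_erase h1m]
  · -- RightInvOn
    rintro μ ⟨hsum, h2, h3, h4, h5⟩
    obtain ⟨hodd, ho3, hmem, hrest⟩ := tgt_facts μ h2 h3 h4 h5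
    dsimp only
    set o := μ.sup with ho
    have herase1 : (1 ::ₘ (o - 1) ::ₘ μ.erase o).erase 1 = (o - 1) ::ₘ μ.erase o :=
      Multiset.erase_cons_head 1 _
    simp only [herase1]
    have hsupE : (μ.erase o).sup ≤ o - 1 := by
      apply Multiset.sup_le.2
      intro b hb
      have := (hrest b hb).2
      omega
    have hsup : ((o - 1) ::ₘ μ.erase o).sup = o - 1 := by
      rw [Multiset.sup_cons]
      exact sup_eq_left.2 hsupE
    rw [hsup, Multiset.erase_cons_head]
    have : o - 1 + 1 = o := by omega
    rw [this, Multiset.cons_erase hmem]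
  · -- MapsTo f
    rintro M ⟨hsum, hc1, hev, hcard, hpos⟩
    obtain ⟨h1m, hevN, hcN, hmN⟩ := dom_facts M hc1 hev hcard
    simp only [Set.mem_setOf_eq]
    set N := M.erase 1 with hN
    set m := N.sup with hm
    have hevm : Even m := hevN m hmN
    have hoddm1 : Odd (m + 1) := Even.add_one hevm
    have hevX : ∀ b ∈ N.erase m, Even b := fun b hb =>
      hevN b (Multiset.mem_of_mem_erase hb)
    have hfodd : ((m + 1) ::ₘ N.erase m).filter (fun x => Odd x) = {m + 1} := by
      rw [Multiset.filter_cons, if_pos hoddm1,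
        Multiset.filter_eq_nil.2 (fun a ha => Nat.not_odd_iff_even.2 (hevX a ha))]
      rfl
    have hfev : ((m + 1) ::ₘ N.erase m).filter (fun x => Even x) = N.erase m := by
      rw [Multiset.filter_cons, if_neg (Nat.not_even_iff_odd.2 hoddm1),
        Multiset.filter_eq_self.2 hevX]
      simp
    have hXcard : (N.erase m).card = N.card - 1 := Multiset.card_erase_of_mem hmN
    refine ⟨?_, ?_, ?_, ?_, ?_⟩
    · -- sum
      have hNsum : N.sum = m + (N.erase m).sum := by
        conv_lhs => rw [← Multiset.cons_erase hmN]
        rw [Multiset.sum_cons]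
      have hMsum : M.sum = 1 + N.sum := by
        conv_lhs => rw [← Multiset.cons_erase h1m]
        rw [Multiset.sum_cons, hN]
      rw [Multiset.sum_cons]
      omega
    · rw [hfodd]; rfl
    · rw [hfev]; omega
    · constructor
      · rw [hfodd]; simp
      · intro a ha hao e he hee
        have hae : a = m + 1 := by
          rcases Multiset.mem_cons.1 ha with h | h
          · exact h
          · exact absurd hao (Nat.not_odd_iff_even.2 (hevX a h))
        have heX : e ∈ N.erase m := by
          rcases Multiset.mem_cons.1 he with h | h
          · rw [h] at hee; exact absurd hee (Nat.not_even_iff_odd.2 hoddm1)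
          · exact h
        have : e ≤ m := Multiset.le_sup (Multiset.mem_of_mem_erase heX)
        omega
    · intro x hx
      rcases Multiset.mem_cons.1 hx with h | h
      · omega
      · have : x ∈ M := Multiset.mem_of_mem_erase (Multiset.mem_of_mem_erase h)
        rcases hpos x this with h' | h' <;> omega
  · -- MapsTo g
    rintro μ ⟨hsum, h2, h3, h4, h5⟩
    obtain ⟨hodd, ho3, hmem, hrest⟩ := tgt_facts μ h2 h3 h4 h5
    simp only [Set.mem_setOf_eq]
    set o := μ.sup with ho
    have hevo1 : Even (o - 1) := Nat.Odd.sub_odd hodd odd_one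
    have hevE : ∀ b ∈ μ.erase o, Even b := fun b hb => (hrest b hb).1
    have hfevE : (μ.erase o).filter (fun x => Even x) = μ.erase o :=
      Multiset.filter_eq_self.2 hevE
    have hEfev : μ.filter (fun x => Even x) = (μ.erase o).filter (fun x => Even x) := by
      conv_lhs => rw [← Multiset.cons_erase hmem]
      rw [Multiset.filter_cons, if_neg (Nat.not_even_iff_odd.2 hodd)]
      simp
    have hc1E : (μ.erase o).count 1 = 0 := by
      rw [Multiset.count_eq_zero]
      intro h1
      have := hevE 1 h1
      norm_num at this
    refine ⟨?_, ?_, ?_, ?_, ?_⟩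
    · -- sum
      have hμsum : μ.sum = o + (μ.erase o).sum := by
        conv_lhs => rw [← Multiset.cons_erase hmem]
        rw [Multiset.sum_cons]
      simp only [Multiset.sum_cons]
      omega
    · -- count 1
      rw [Multiset.count_cons_self, Multiset.count_cons_of_ne (by omega : (1:ℕ) ≠ o - 1),
        hc1E]
    · -- all ≠ 1 even
      intro x hx hne
      rcases Multiset.mem_cons.1 hx with h | h
      · exact absurd h hne
      rcases Multiset.mem_cons.1 h with h' | h'
      · rw [h']; exact hevo1
      · exact hevE x h'
    · -- filter even card ≥ 3
      have : (1 ::ₘ (o - 1) ::ₘ μ.erase o).filter (fun x => Even x)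
          = (o - 1) ::ₘ μ.erase o := by
        rw [Multiset.filter_cons, Multiset.filter_cons, if_neg (by norm_num),
          if_pos hevo1, hfevE]
        simp
      rw [this]
      rw [hEfev, hfevE] at h3
      rw [Multiset.card_cons]
      omega
    · -- all parts 1 < x ∨ x = 1
      intro x hx
      rcases Multiset.mem_cons.1 hx with h | h
      · right; exact h
      rcases Multiset.mem_cons.1 h with h' | h'
      · left; omega
      · left
        have h1 := h5 x (Multiset.mem_of_mem_erase h')
        obtain ⟨k, hk⟩ := hevE x h'
        omega
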